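/- Let 1 ≤ m ≤ n be integers, let 0 < s ≤ m, and let μ be a compactly supported Borel probability measure on ℝ^n whose support is contained in an s-Ahlfors regular set. Then for every ε > 0, for μ-almost every x there exist c > 0 and r₀ > 0 such that μ∗φ_r^m(x) ≤ c r^{−ε} μ(B(x,r)) for all 0 < r < r₀. -/

import Mathlib

open MeasureTheory Metric Set
open scoped NNReal ENNReal

/-- The topological support of a measure. -/
def measureSupport {n : ℕ} (μ : Measure (EuclideanSpace ℝ (Fin n))) :
    Set (EuclideanSpace ℝ (Fin n)) :=
  {x | ∀ U : Set (EuclideanSpace ℝ (Fin n)), IsOpen U → x ∈ U → 0 < μ U}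

/-- The convolution `μ∗φ_r^m(x) = ∫ min {1, r^m |x-y|^{-m}} dμ(y)`, with the
integrand equal to `1` when `y = x`. -/
noncomputable def convPhi {n : ℕ} (m : ℕ) (μ : Measure (EuclideanSpace ℝ (Fin n)))
    (x : EuclideanSpace ℝ (Fin n)) (r : ℝ) : ℝ :=
  ∫ y, (if ‖x - y‖ = 0 then 1 else min 1 (r ^ m / ‖x - y‖ ^ m)) ∂μ

/-- A closed set `F ⊆ ℝ^n` is `s`-Ahlfors regular if there are a Borel measure `λ`
and a constant `1 ≤ C < ∞` with `λ F > 0` and `C⁻¹ r^s ≤ λ(B(x,r)) ≤ C r^s` for all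
`x ∈ F` and `0 < r ≤ 1`. -/
def IsAhlforsRegular {n : ℕ} (s : ℝ) (F : Set (EuclideanSpace ℝ (Fin n))) : Prop :=
  IsClosed F ∧ ∃ (lam : Measure (EuclideanSpace ℝ (Fin n))) (C : ℝ), 1 ≤ C ∧ 0 < lam F ∧
    ∀ x ∈ F, ∀ r : ℝ, 0 < r → r ≤ 1 →
      ENNReal.ofReal (C⁻¹ * r ^ s) ≤ lam (ball x r) ∧ lam (ball x r) ≤ ENNReal.ofReal (C * r ^ s)

/-- radius scale -/
noncomputable def RR (j : ℕ) : ℝ := (2:ℝ) ^ (-(j:ℝ))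

lemma RR_pos (j : ℕ) : 0 < RR j := Real.rpow_pos_of_pos two_pos _

lemma RR_anti {i j : ℕ} (h : i ≤ j) : RR j ≤ RR i := by
  apply Real.rpow_le_rpow_left_iff (x := 2) one_lt_two |>.2
  simp only [neg_le_neg_iff, Nat.cast_le]; exact_mod_cast h

lemma RR_lt {i j : ℕ} (h : i < j) : RR j < RR i := by
  apply Real.rpow_lt_rpow_left_iff (x := 2) one_lt_two |>.2
  simp only [neg_lt_neg_iff]; exact_mod_cast h

lemma RR_le_one (j : ℕ) : RR j ≤ 1 := by
  have := RR_anti (Nat.zero_le j); simpa [RR] using this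

lemma RR_succ (j : ℕ) : 2 * RR (j+1) = RR j := by
  unfold RR
  have h1 : (2:ℝ) * 2 ^ (-((j:ℝ)+1)) = 2 ^ (1 + -((j:ℝ)+1)) := by
    rw [Real.rpow_add two_pos, Real.rpow_one]
  have h2 : (1 + -((j:ℝ)+1)) = -(j:ℝ) := by ring
  push_cast
  rw [h1, h2]

lemma ae_mem_measureSupport {n : ℕ} (μ : Measure (EuclideanSpace ℝ (Fin n))) :
    ∀ᵐ x ∂μ, x ∈ measureSupport μ := by
  classical
  set B := TopologicalSpace.countableBasis (EuclideanSpace ℝ (Fin n)) with hBdef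
  have hB : TopologicalSpace.IsTopologicalBasis B :=
    TopologicalSpace.isBasis_countableBasis _
  have hc : B.Countable := TopologicalSpace.countable_countableBasis _
  have hnull : μ (⋃₀ {b ∈ B | μ b = 0}) = 0 := by
    rw [measure_sUnion_null_iff (hc.mono (sep_subset _ _))]
    exact fun s hs => hs.2
  rw [ae_iff]
  refine measure_mono_null ?_ hnull
  intro x hx
  simp only [mem_setOf_eq, measureSupport] at hx
  push_neg at hx
  obtain ⟨U, hU, hxU, hμU⟩ := hx
  obtain ⟨b, hbB, hxb, hbU⟩ := hB.exists_subset_of_mem_open hxU hU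
  have : μ b = 0 := le_antisymm (le_trans (measure_mono hbU) hμU) zero_le
  exact ⟨b, ⟨hbB, this⟩, hxb⟩

lemma RR_eq (j : ℕ) : RR j = (1/2:ℝ)^j := by
  rw [RR, one_div, ← Real.rpow_natCast (2⁻¹:ℝ) j,
    show ((2:ℝ)⁻¹) = (2:ℝ)^(-1:ℝ) from (Real.rpow_neg_one 2).symm,
    ← Real.rpow_mul (by norm_num)]
  congr 1
  ring

lemma RR_one : RR 1 = 1/2 := by rw [RR_eq]; norm_num

/-- Counting lemma. -/
lemma counting {n : ℕ} {s C : ℝ} (hs : 0 < s) (hC : 1 ≤ C)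
    {F : Set (EuclideanSpace ℝ (Fin n))} {lam : Measure (EuclideanSpace ℝ (Fin n))}
    (hreg : ∀ x ∈ F, ∀ r : ℝ, 0 < r → r ≤ 1 →
      ENNReal.ofReal (C⁻¹ * r ^ s) ≤ lam (ball x r) ∧ lam (ball x r) ≤ ENNReal.ofReal (C * r ^ s))
    (Q : Finset (EuclideanSpace ℝ (Fin n))) (hQF : ∀ q ∈ Q, q ∈ F)
    {σ ρ : ℝ} (hσ : 0 < σ) (hσ1 : σ ≤ 1) (hρ : 0 < ρ) (hρ1 : ρ + σ/2 ≤ 1)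
    (hsep : ∀ p ∈ Q, ∀ q ∈ Q, p ≠ q → σ ≤ dist p q)
    {z : EuclideanSpace ℝ (Fin n)} (hz : z ∈ F) (hQz : ∀ q ∈ Q, q ∈ ball z ρ) :
    (Q.card : ℝ) ≤ C^2 * ((ρ + σ/2) ^ s / (σ/2) ^ s) := by
  classical
  have hσ2 : 0 < σ/2 := by linarith
  have hσ21 : σ/2 ≤ 1 := by linarith
  have hρσ : 0 < ρ + σ/2 := by linarith
  have hC0 : 0 < C := lt_of_lt_of_le one_pos hC
  have hsmall : 0 < (σ/2) ^ s := Real.rpow_pos_of_pos hσ2 _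
  have hbig : 0 < (ρ + σ/2) ^ s := Real.rpow_pos_of_pos hρσ _
  -- disjointness of the small balls
  have hdisj : (Q : Set (EuclideanSpace ℝ (Fin n))).PairwiseDisjoint
      (fun q => ball q (σ/2)) := by
    intro p hp q hq hpq
    apply ball_disjoint_ball
    have := hsep p hp q hq hpq
    linarith [this]
  -- measure of union
  have hunion : lam (⋃ q ∈ Q, ball q (σ/2)) = ∑ q ∈ Q, lam (ball q (σ/2)) :=
    measure_biUnion_finset hdisj (fun q _ => measurableSet_ball)
  have hsub : (⋃ q ∈ Q, ball q (σ/2)) ⊆ ball z (ρ + σ/2) := by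
    intro y hy
    simp only [mem_iUnion] at hy
    obtain ⟨q, hq, hyq⟩ := hy
    have h1 : dist y q < σ/2 := mem_ball.1 hyq
    have h2 : dist q z < ρ := mem_ball.1 (hQz q hq)
    have := dist_triangle y q z
    exact mem_ball.2 (by linarith)
  have key : ENNReal.ofReal (C⁻¹ * (σ/2) ^ s) * Q.card ≤ ENNReal.ofReal (C * (ρ + σ/2) ^ s) := by
    calc ENNReal.ofReal (C⁻¹ * (σ/2) ^ s) * Q.card
        = ∑ _q ∈ Q, ENNReal.ofReal (C⁻¹ * (σ/2) ^ s) := by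
          rw [Finset.sum_const, nsmul_eq_mul, mul_comm]
      _ ≤ ∑ q ∈ Q, lam (ball q (σ/2)) :=
          Finset.sum_le_sum (fun q hq => (hreg q (hQF q hq) (σ/2) hσ2 hσ21).1)
      _ = lam (⋃ q ∈ Q, ball q (σ/2)) := hunion.symm
      _ ≤ lam (ball z (ρ + σ/2)) := measure_mono hsub
      _ ≤ ENNReal.ofReal (C * (ρ + σ/2) ^ s) := (hreg z hz _ hρσ hρ1).2
  have hreal : C⁻¹ * (σ/2) ^ s * Q.card ≤ C * (ρ + σ/2) ^ s := by
    have h1 : ENNReal.ofReal (C⁻¹ * (σ/2) ^ s * Q.card) ≤ ENNReal.ofReal (C * (ρ + σ/2) ^ s) := by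
      rw [ENNReal.ofReal_mul (by positivity)]
      simpa [ENNReal.ofReal_natCast] using key
    exact (ENNReal.ofReal_le_ofReal_iff (by positivity)).1 h1
  have hCinv : 0 < C⁻¹ := inv_pos.2 hC0
  have h2 : (Q.card : ℝ) ≤ (C * (ρ + σ/2) ^ s) / (C⁻¹ * (σ/2) ^ s) :=
    (le_div_iff₀ (by positivity)).2 (by nlinarith [hreal])
  have h3 : (C * (ρ + σ/2) ^ s) / (C⁻¹ * (σ/2) ^ s) = C^2 * ((ρ + σ/2) ^ s / (σ/2) ^ s) := by
    field_simp
  linarith [h2, h3.le, h3.ge]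

/-- Existence of a maximal t-separated net of a compact set K ⊆ F. -/
lemma net_exists {n : ℕ} {s C : ℝ} (hs : 0 < s) (hC : 1 ≤ C)
    {F : Set (EuclideanSpace ℝ (Fin n))} {lam : Measure (EuclideanSpace ℝ (Fin n))}
    (hreg : ∀ x ∈ F, ∀ r : ℝ, 0 < r → r ≤ 1 →
      ENNReal.ofReal (C⁻¹ * r ^ s) ≤ lam (ball x r) ∧ lam (ball x r) ≤ ENNReal.ofReal (C * r ^ s))
    {K : Set (EuclideanSpace ℝ (Fin n))} (hK : IsCompact K) (hKF : K ⊆ F)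
    {t : ℝ} (ht : 0 < t) (ht1 : t ≤ 1/2) :
    ∃ P : Finset (EuclideanSpace ℝ (Fin n)), (∀ p ∈ P, p ∈ K) ∧
      (∀ p ∈ P, ∀ q ∈ P, p ≠ q → t ≤ dist p q) ∧
      K ⊆ ⋃ p ∈ P, ball p t := by
  classical
  -- finite 1/2-cover of K
  obtain ⟨T, hT⟩ : ∃ T : Finset K, K ⊆ ⋃ y ∈ T, ball (y : EuclideanSpace ℝ (Fin n)) (1/2) := by
    rcases hK.elim_finite_subcover (fun y : K => ball (y : EuclideanSpace ℝ (Fin n)) (1/2))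
      (fun y => isOpen_ball) (fun x hx => mem_iUnion.2 ⟨⟨x, hx⟩, mem_ball_self (by norm_num)⟩)
      with ⟨T, hT⟩
    exact ⟨T, hT⟩
  -- uniform cardinality bound for t-separated subsets of K
  set Nb : ℝ := (T.card : ℝ) * (C^2 * ((1/2 + t/2) ^ s / (t/2) ^ s)) with hNb
  have hcard : ∀ Q : Finset (EuclideanSpace ℝ (Fin n)), (∀ p ∈ Q, p ∈ K) →
      (∀ p ∈ Q, ∀ q ∈ Q, p ≠ q → t ≤ dist p q) → (Q.card : ℝ) ≤ Nb := by
    intro Q hQK hQsep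
    have hsubset : Q ⊆ T.biUnion (fun y => Q.filter (fun p => p ∈ ball (y : EuclideanSpace ℝ (Fin n)) (1/2))) := by
      intro p hp
      have := hT (hQK p hp)
      simp only [mem_iUnion] at this
      obtain ⟨y, hy, hpy⟩ := this
      exact Finset.mem_biUnion.2 ⟨y, hy, Finset.mem_filter.2 ⟨hp, hpy⟩⟩
    calc (Q.card : ℝ) ≤ ((T.biUnion (fun y => Q.filter (fun p => p ∈ ball (y : EuclideanSpace ℝ (Fin n)) (1/2)))).card : ℝ) := by
          exact_mod_cast Finset.card_le_card hsubset
      _ ≤ ∑ y ∈ T, ((Q.filter (fun p => p ∈ ball (y : EuclideanSpace ℝ (Fin n)) (1/2))).card : ℝ) := by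
          exact_mod_cast Finset.card_biUnion_le
      _ ≤ ∑ _y ∈ T, (C^2 * ((1/2 + t/2) ^ s / (t/2) ^ s)) := by
          apply Finset.sum_le_sum
          intro y hy
          apply counting hs hC hreg _ (fun q hq => hKF (hQK q (Finset.mem_filter.1 hq).1))
            ht ?_ ?_ ?_ (fun p hp q hq hpq => hQsep p (Finset.mem_filter.1 hp).1 q (Finset.mem_filter.1 hq).1 hpq)
            (hKF y.2) (fun q hq => (Finset.mem_filter.1 hq).2)
          · linarith
          · norm_num
          · linarith
      _ = Nb := by rw [Finset.sum_const, nsmul_eq_mul, hNb]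
  -- the set of achievable cardinalities
  set S : Set ℕ := {c : ℕ | ∃ Q : Finset (EuclideanSpace ℝ (Fin n)), (∀ p ∈ Q, p ∈ K) ∧
      (∀ p ∈ Q, ∀ q ∈ Q, p ≠ q → t ≤ dist p q) ∧ Q.card = c} with hS
  have hS0 : 0 ∈ S := ⟨∅, by simp⟩
  have hSbdd : BddAbove S := by
    refine ⟨⌈Nb⌉₊, fun c hc => ?_⟩
    obtain ⟨Q, hQK, hQsep, hQc⟩ := hc
    have h := hcard Q hQK hQsep
    rw [hQc] at h
    have h2 : (c : ℝ) ≤ (⌈Nb⌉₊ : ℝ) := h.trans (Nat.le_ceil Nb)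
    exact_mod_cast h2
  obtain ⟨Q, hQK, hQsep, hQc⟩ : sSup S ∈ S := Nat.sSup_mem ⟨0, hS0⟩ hSbdd
  refine ⟨Q, hQK, hQsep, ?_⟩
  intro x hx
  by_contra hxc
  simp only [mem_iUnion, mem_ball] at hxc
  push_neg at hxc
  have hxQ : x ∉ Q := by
    intro hxQ
    have := hxc x hxQ
    simp at this
    linarith
  have hins : (insert x Q).card ∈ S := by
    refine ⟨insert x Q, ?_, ?_, rfl⟩
    · intro p hp
      rcases Finset.mem_insert.1 hp with h | h
      · exact h ▸ hx
      · exact hQK p h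
    · intro p hp q hq hpq
      rcases Finset.mem_insert.1 hp with h1 | h1 <;> rcases Finset.mem_insert.1 hq with h2 | h2
      · exact absurd (h1.trans h2.symm) hpq
      · rw [h1]; exact hxc q h2
      · rw [h2, dist_comm]; exact hxc p h1
      · exact hQsep p h1 q h2 hpq
  have : (insert x Q).card ≤ sSup S := le_csSup hSbdd hins
  rw [Finset.card_insert_of_notMem hxQ, hQc] at this
  omega

section main
variable {n : ℕ} {s C δ : ℝ}
variable {F : Set (EuclideanSpace ℝ (Fin n))} {lam : Measure (EuclideanSpace ℝ (Fin n))}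
variable {μ : Measure (EuclideanSpace ℝ (Fin n))}

/-- the bad set at scales (k, l) -/
def BadSet (μ : Measure (EuclideanSpace ℝ (Fin n))) (s δ : ℝ) (k l : ℕ) :
    Set (EuclideanSpace ℝ (Fin n)) :=
  {z | ¬ (μ (ball z (RR l)) ≤
      ENNReal.ofReal ((2:ℝ) ^ (((k:ℝ) - (l:ℝ)) * s + (k:ℝ) * δ)) * μ (ball z (RR k)))}

lemma badSet_measure (hs : 0 < s) (hC : 1 ≤ C) (hδ : 0 < δ)
    (hreg : ∀ x ∈ F, ∀ r : ℝ, 0 < r → r ≤ 1 →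
      ENNReal.ofReal (C⁻¹ * r ^ s) ≤ lam (ball x r) ∧ lam (ball x r) ≤ ENNReal.ofReal (C * r ^ s))
    [IsProbabilityMeasure μ]
    (hcompact : IsCompact (measureSupport μ)) (hsupp : measureSupport μ ⊆ F)
    (hsuppae : μ {x | x ∉ measureSupport μ} = 0)
    (hnet : ∀ t : ℝ, 0 < t → t ≤ 1/2 →
      ∃ P : Finset (EuclideanSpace ℝ (Fin n)), (∀ p ∈ P, p ∈ measureSupport μ) ∧
        (∀ p ∈ P, ∀ q ∈ P, p ≠ q → t ≤ dist p q) ∧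
        measureSupport μ ⊆ ⋃ p ∈ P, ball p t)
    {k l : ℕ} (hl3 : 3 ≤ l) (hlk : l ≤ k) :
    μ (BadSet μ s δ k l) ≤ ENNReal.ofReal (C^2 * (2:ℝ)^(5*s) * (2:ℝ)^(-(k:ℝ)*δ)) := by
  classical
  set K := measureSupport μ
  obtain ⟨P, hPK, hPsep, hPcov⟩ := hnet (RR (k+1)) (RR_pos _)
    ((RR_anti (show 1 ≤ k+1 by omega)).trans (le_of_eq RR_one))
  set t := RR (k+1) with ht
  set u := ((k:ℝ) - (l:ℝ)) * s + (k:ℝ) * δ with hu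
  set c := ENNReal.ofReal ((2:ℝ) ^ u) with hc
  -- pointwise multiplicity bound
  have hmult : ∀ y, (∑ p ∈ P, (ball p (RR (l-1))).indicator (1 : EuclideanSpace ℝ (Fin n) → ℝ≥0∞) y)
      ≤ ENNReal.ofReal (C^2 * (2:ℝ)^(((k:ℝ) - (l:ℝ) + 5) * s)) := by
    intro y
    have hbool : (∑ p ∈ P, (ball p (RR (l-1))).indicator (1 : EuclideanSpace ℝ (Fin n) → ℝ≥0∞) y)
        = ((P.filter (fun p => y ∈ ball p (RR (l-1)))).card : ℝ≥0∞) := by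
      rw [← Finset.sum_boole]
      apply Finset.sum_congr rfl
      intro p _
      by_cases h : y ∈ ball p (RR (l-1)) <;> simp [Set.indicator_apply, h]
    rw [hbool]
    set Q := P.filter (fun p => y ∈ ball p (RR (l-1))) with hQ
    rcases Q.eq_empty_or_nonempty with h | ⟨p₀, hp₀⟩
    · simp [h]
    · have hQF : ∀ q ∈ Q, q ∈ F := fun q hq => hsupp (hPK q (Finset.mem_filter.1 hq).1)
      have hQball : ∀ q ∈ Q, q ∈ ball p₀ (RR (l-2)) := by
        intro q hq
        have h1 : dist y q < RR (l-1) := (Finset.mem_filter.1 hq).2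
        have h2 : dist y p₀ < RR (l-1) := (Finset.mem_filter.1 hp₀).2
        have h3 : 2 * RR ((l-2)+1) = RR (l-2) := RR_succ _
        have hl2 : (l-2)+1 = l-1 := by omega
        rw [hl2] at h3
        have := dist_triangle q y p₀
        rw [mem_ball]
        rw [dist_comm] at h1
        linarith
      have hcard : ((Q.card : ℝ)) ≤ C^2 * ((RR (l-2) + t/2) ^ s / (t/2) ^ s) := by
        apply counting hs hC hreg Q hQF (RR_pos _)
          ((RR_anti (show 1 ≤ k+1 by omega)).trans (by rw [RR_one]; norm_num))
          (RR_pos _) ?_ (fun p hp q hq hpq => hPsep p (Finset.mem_filter.1 hp).1 q (Finset.mem_filter.1 hq).1 hpq)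
          (hQF p₀ hp₀) hQball
        · -- RR (l-2) + t/2 ≤ 1
          have h1 : t / 2 = RR (k+2) := by
            have := RR_succ (k+1); unfold t; linarith
          have h2 : RR (k+2) ≤ RR (l-2) := RR_anti (by omega)
          have h3 : 2 * RR ((l-3)+1) = RR (l-3) := RR_succ _
          have hl2 : (l-3)+1 = l-2 := by omega
          rw [hl2] at h3
          have h4 : RR (l-3) ≤ 1 := RR_le_one _
          rw [h1]
          linarith
      -- convert the real bound to the ENNReal bound
      have hrr : C^2 * ((RR (l-2) + t/2) ^ s / (t/2) ^ s)
          ≤ C^2 * (2:ℝ)^(((k:ℝ) - (l:ℝ) + 5) * s) := by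
        have h1 : t / 2 = RR (k+2) := by
          have := RR_succ (k+1); unfold t; linarith
        have h3 : 2 * RR ((l-3)+1) = RR (l-3) := RR_succ _
        have hl2 : (l-3)+1 = l-2 := by omega
        rw [hl2] at h3
        have h2 : RR (k+2) ≤ RR (l-2) := RR_anti (by omega)
        have hnum : RR (l-2) + RR (k+2) ≤ RR (l-3) := by linarith
        have hratio : (RR (l-2) + t/2) ^ s / (t/2) ^ s ≤ (RR (l-3)) ^ s / (RR (k+2)) ^ s := by
          rw [h1]
          exact div_le_div₀ (Real.rpow_pos_of_pos (RR_pos _) s).le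
            (Real.rpow_le_rpow (add_pos (RR_pos _) (RR_pos _)).le hnum hs.le)
            (Real.rpow_pos_of_pos (RR_pos _) s) le_rfl
        have hRs : ∀ j : ℕ, (RR j) ^ s = (2:ℝ) ^ (-(j:ℝ) * s) := by
          intro j
          rw [RR, ← Real.rpow_mul (by norm_num)]
        have hfin : (RR (l-3)) ^ s / (RR (k+2)) ^ s = (2:ℝ)^(((k:ℝ) - (l:ℝ) + 5) * s) := by
          rw [hRs, hRs, ← Real.rpow_sub two_pos]
          congr 1
          have hc3 : ((l-3:ℕ):ℝ) = (l:ℝ) - 3 := by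
            have := Nat.cast_sub hl3 (R := ℝ); push_cast at this ⊢; linarith
          rw [hc3]
          push_cast
          ring
        have hC2 : (0:ℝ) ≤ C^2 := by positivity
        calc C^2 * ((RR (l-2) + t/2) ^ s / (t/2) ^ s)
            ≤ C^2 * ((RR (l-3)) ^ s / (RR (k+2)) ^ s) := by
              apply mul_le_mul_of_nonneg_left hratio hC2
          _ = C^2 * (2:ℝ)^(((k:ℝ) - (l:ℝ) + 5) * s) := by rw [hfin]
      have : ((Q.card : ℝ)) ≤ C^2 * (2:ℝ)^(((k:ℝ) - (l:ℝ) + 5) * s) := hcard.trans hrr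
      calc ((Q.card : ℕ) : ℝ≥0∞) = ENNReal.ofReal ((Q.card : ℝ)) := by
            rw [ENNReal.ofReal_natCast]
        _ ≤ ENNReal.ofReal (C^2 * (2:ℝ)^(((k:ℝ) - (l:ℝ) + 5) * s)) := ENNReal.ofReal_le_ofReal this
  -- sum of measures of the dilated balls
  have hsum : ∑ p ∈ P, μ (ball p (RR (l-1)))
      ≤ ENNReal.ofReal (C^2 * (2:ℝ)^(((k:ℝ) - (l:ℝ) + 5) * s)) := by
    calc ∑ p ∈ P, μ (ball p (RR (l-1)))
        = ∑ p ∈ P, ∫⁻ y, (ball p (RR (l-1))).indicator (1 : EuclideanSpace ℝ (Fin n) → ℝ≥0∞) y ∂μ := by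
          refine Finset.sum_congr rfl fun p _ => ?_
          rw [lintegral_indicator_one measurableSet_ball]
      _ = ∫⁻ y, ∑ p ∈ P, (ball p (RR (l-1))).indicator (1 : EuclideanSpace ℝ (Fin n) → ℝ≥0∞) y ∂μ :=
          (lintegral_finset_sum _ (fun p _ => measurable_const.indicator measurableSet_ball)).symm
      _ ≤ ∫⁻ _y, ENNReal.ofReal (C^2 * (2:ℝ)^(((k:ℝ) - (l:ℝ) + 5) * s)) ∂μ :=
          lintegral_mono hmult
      _ = ENNReal.ofReal (C^2 * (2:ℝ)^(((k:ℝ) - (l:ℝ) + 5) * s)) := by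
          simp [lintegral_const]
  -- the key chain
  have hperp : ∀ p ∈ P, c * μ (ball p t ∩ BadSet μ s δ k l) ≤ μ (ball p (RR (l-1))) := by
    intro p _
    rcases (ball p t ∩ BadSet μ s δ k l).eq_empty_or_nonempty with h | ⟨z, hz⟩
    · simp [h]
    · have hz1 : dist z p < t := mem_ball.1 hz.1
      have hz2 : ¬ (μ (ball z (RR l)) ≤ c * μ (ball z (RR k))) := hz.2
      have htRRk : 2 * t = RR k := RR_succ k
      have htl : t ≤ RR l := RR_anti (by omega)
      have hll : 2 * RR ((l-1)+1) = RR (l-1) := RR_succ _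
      have hl1 : (l-1)+1 = l := by omega
      rw [hl1] at hll
      have hsub1 : ball p t ∩ BadSet μ s δ k l ⊆ ball z (RR k) := by
        intro w hw
        have h1 : dist w p < t := mem_ball.1 hw.1
        have := dist_triangle w p z
        rw [mem_ball]
        rw [dist_comm] at hz1
        linarith
      have hsub2 : ball z (RR l) ⊆ ball p (RR (l-1)) := by
        intro w hw
        have h1 : dist w z < RR l := mem_ball.1 hw
        have := dist_triangle w z p
        rw [mem_ball]
        linarith
      calc c * μ (ball p t ∩ BadSet μ s δ k l) ≤ c * μ (ball z (RR k)) :=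
            mul_le_mul_right (measure_mono hsub1) _
        _ ≤ μ (ball z (RR l)) := le_of_lt (not_le.1 hz2)
        _ ≤ μ (ball p (RR (l-1))) := measure_mono hsub2
  have hcover : BadSet μ s δ k l ∩ K ⊆ ⋃ p ∈ P, (ball p t ∩ BadSet μ s δ k l) := by
    intro x hx
    obtain ⟨hx1, hx2⟩ := hx
    have hcov := hPcov hx2
    simp only [mem_iUnion] at hcov ⊢
    obtain ⟨p, hp, hxp⟩ := hcov
    exact ⟨p, hp, hxp, hx1⟩
  have hBadK : c * μ (BadSet μ s δ k l ∩ K)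
      ≤ ENNReal.ofReal (C^2 * (2:ℝ)^(((k:ℝ) - (l:ℝ) + 5) * s)) := by
    calc c * μ (BadSet μ s δ k l ∩ K)
        ≤ c * ∑ p ∈ P, μ (ball p t ∩ BadSet μ s δ k l) :=
          mul_le_mul_right ((measure_mono hcover).trans (measure_biUnion_finset_le _ _)) _
      _ = ∑ p ∈ P, c * μ (ball p t ∩ BadSet μ s δ k l) := Finset.mul_sum _ _ _
      _ ≤ ∑ p ∈ P, μ (ball p (RR (l-1))) := Finset.sum_le_sum hperp
      _ ≤ _ := hsum
  -- remove the multiplication by c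
  have hcinv : ENNReal.ofReal ((2:ℝ)^(-u)) * c = 1 := by
    rw [hc, ← ENNReal.ofReal_mul (by positivity), ← Real.rpow_add two_pos]
    norm_num
  have hBadK2 : μ (BadSet μ s δ k l ∩ K)
      ≤ ENNReal.ofReal ((2:ℝ)^(-u)) * ENNReal.ofReal (C^2 * (2:ℝ)^(((k:ℝ) - (l:ℝ) + 5) * s)) := by
    calc μ (BadSet μ s δ k l ∩ K)
        = (ENNReal.ofReal ((2:ℝ)^(-u)) * c) * μ (BadSet μ s δ k l ∩ K) := by rw [hcinv, one_mul]
      _ = ENNReal.ofReal ((2:ℝ)^(-u)) * (c * μ (BadSet μ s δ k l ∩ K)) := by rw [mul_assoc]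
      _ ≤ _ := mul_le_mul_right hBadK _
  have hfinal : ENNReal.ofReal ((2:ℝ)^(-u)) * ENNReal.ofReal (C^2 * (2:ℝ)^(((k:ℝ) - (l:ℝ) + 5) * s))
      = ENNReal.ofReal (C^2 * (2:ℝ)^(5*s) * (2:ℝ)^(-(k:ℝ)*δ)) := by
    rw [← ENNReal.ofReal_mul (by positivity)]
    congr 1
    rw [show (2:ℝ)^(-u) * (C^2 * (2:ℝ)^(((k:ℝ) - (l:ℝ) + 5) * s))
        = C^2 * ((2:ℝ)^(-u) * (2:ℝ)^(((k:ℝ) - (l:ℝ) + 5) * s)) by ring,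
      ← Real.rpow_add two_pos, show -u + ((k:ℝ) - (l:ℝ) + 5) * s = 5*s + (-(k:ℝ)*δ) by rw [hu]; ring,
      Real.rpow_add two_pos]
    ring
  calc μ (BadSet μ s δ k l) ≤ μ (BadSet μ s δ k l ∩ K) + μ (BadSet μ s δ k l \ K) :=
        measure_le_inter_add_diff _ _ _
    _ ≤ μ (BadSet μ s δ k l ∩ K) + 0 := by
        gcongr
        have : μ (BadSet μ s δ k l \ K) = 0 := by
          refine measure_mono_null ?_ hsuppae
          intro x hx
          exact hx.2
        exact this.le
    _ = μ (BadSet μ s δ k l ∩ K) := by rw [add_zero]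
    _ ≤ _ := hBadK2.trans (le_of_eq hfinal)
lemma main_ae (hs : 0 < s) (hC : 1 ≤ C) (hδ : 0 < δ)
    (hreg : ∀ x ∈ F, ∀ r : ℝ, 0 < r → r ≤ 1 →
      ENNReal.ofReal (C⁻¹ * r ^ s) ≤ lam (ball x r) ∧ lam (ball x r) ≤ ENNReal.ofReal (C * r ^ s))
    [IsProbabilityMeasure μ]
    (hcompact : IsCompact (measureSupport μ)) (hsupp : measureSupport μ ⊆ F)
    (hsuppae : μ {x | x ∉ measureSupport μ} = 0)
    (hnet : ∀ t : ℝ, 0 < t → t ≤ 1/2 →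
      ∃ P : Finset (EuclideanSpace ℝ (Fin n)), (∀ p ∈ P, p ∈ measureSupport μ) ∧
        (∀ p ∈ P, ∀ q ∈ P, p ≠ q → t ≤ dist p q) ∧
        measureSupport μ ⊆ ⋃ p ∈ P, ball p t) :
    ∀ᵐ x ∂μ, ∃ k₀ : ℕ, 5 ≤ k₀ ∧ ∀ k, k₀ ≤ k → ∀ l, 3 ≤ l → l ≤ k →
      μ (ball x (RR l)) ≤
        ENNReal.ofReal ((2:ℝ) ^ (((k:ℝ) - (l:ℝ)) * s + (k:ℝ) * δ)) * μ (ball x (RR k)) := by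
  classical
  set Cq : ℝ := C^2 * (2:ℝ)^(5*s) with hCq
  have hCq0 : 0 ≤ Cq := by positivity
  set q : ℝ := (2:ℝ)^(-δ) with hq
  have hq0 : 0 < q := Real.rpow_pos_of_pos two_pos _
  have hq1 : q < 1 := Real.rpow_lt_one_of_one_lt_of_neg one_lt_two (neg_lt_zero.2 hδ)
  have hqk : ∀ k : ℕ, (2:ℝ)^(-(k:ℝ)*δ) = q^k := by
    intro k
    rw [hq, ← Real.rpow_natCast ((2:ℝ)^(-δ)) k, ← Real.rpow_mul (by norm_num)]
    congr 1
    ring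
  set g : ℕ → ℝ := fun k => ((k:ℝ)+1) * (Cq * q^k) with hg
  have hgnonneg : ∀ k, 0 ≤ g k := by
    intro k
    have : (0:ℝ) ≤ (k:ℝ)+1 := by positivity
    exact mul_nonneg this (mul_nonneg hCq0 (pow_nonneg hq0.le _))
  have hBadU : ∀ k : ℕ, μ (⋃ l ∈ Finset.Icc 3 k, BadSet μ s δ k l) ≤ ENNReal.ofReal (g k) := by
    intro k
    calc μ (⋃ l ∈ Finset.Icc 3 k, BadSet μ s δ k l)
        ≤ ∑ l ∈ Finset.Icc 3 k, μ (BadSet μ s δ k l) := measure_biUnion_finset_le _ _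
      _ ≤ ∑ _l ∈ Finset.Icc 3 k, ENNReal.ofReal (Cq * q^k) := by
          apply Finset.sum_le_sum
          intro l hl
          have h1 := (Finset.mem_Icc.1 hl).1
          have h2 := (Finset.mem_Icc.1 hl).2
          have := badSet_measure hs hC hδ hreg hcompact hsupp hsuppae hnet h1 h2
          refine this.trans (le_of_eq ?_)
          rw [hqk]
      _ = ((Finset.Icc 3 k).card : ℝ≥0∞) * ENNReal.ofReal (Cq * q^k) := by
          rw [Finset.sum_const, nsmul_eq_mul]
      _ ≤ ENNReal.ofReal ((k:ℝ)+1) * ENNReal.ofReal (Cq * q^k) := by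
          apply mul_le_mul_left
          rw [show (((Finset.Icc 3 k).card : ℕ) : ℝ≥0∞) = ENNReal.ofReal (((Finset.Icc 3 k).card : ℕ) : ℝ) by
            rw [ENNReal.ofReal_natCast]]
          apply ENNReal.ofReal_le_ofReal
          have : (Finset.Icc 3 k).card ≤ k + 1 := by
            rw [Nat.card_Icc]
            omega
          exact_mod_cast this
      _ = ENNReal.ofReal (g k) := by
          rw [← ENNReal.ofReal_mul (by positivity), hg]
  have hsummable : Summable g := by
    have habs : ‖q‖ < 1 := by rw [Real.norm_eq_abs, abs_of_pos hq0]; exact hq1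
    have h1 : Summable (fun k : ℕ => (k:ℝ) * q^k) := by
      simpa using summable_pow_mul_geometric_of_norm_lt_one 1 habs
    have h2 : Summable (fun k : ℕ => q^k) := summable_geometric_of_lt_one hq0.le hq1
    have h3 : Summable (fun k : ℕ => ((k:ℝ)+1) * q^k) := by
      have := h1.add h2
      apply Summable.congr this
      intro k
      ring
    have := h3.mul_left Cq
    apply Summable.congr this
    intro k
    rw [hg]
    ring
  have htsum : (∑' k : ℕ, μ (⋃ l ∈ Finset.Icc 3 k, BadSet μ s δ k l)) ≠ ⊤ := by
    have h1 : (∑' k : ℕ, μ (⋃ l ∈ Finset.Icc 3 k, BadSet μ s δ k l))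
        ≤ ∑' k : ℕ, ENNReal.ofReal (g k) := ENNReal.tsum_le_tsum hBadU
    rw [← ENNReal.ofReal_tsum_of_nonneg hgnonneg hsummable] at h1
    exact ne_top_of_le_ne_top ENNReal.ofReal_ne_top h1
  filter_upwards [MeasureTheory.ae_eventually_notMem htsum] with x hx
  obtain ⟨k₁, hk₁⟩ := Filter.eventually_atTop.1 hx
  refine ⟨max 5 k₁, le_max_left _ _, ?_⟩
  intro k hk l hl3 hlk
  have hnot : x ∉ ⋃ l ∈ Finset.Icc 3 k, BadSet μ s δ k l :=
    hk₁ k (le_trans (le_max_right _ _) hk)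
  by_contra hcon
  apply hnot
  simp only [mem_iUnion]
  exact ⟨l, Finset.mem_Icc.2 ⟨hl3, hlk⟩, hcon⟩

end main

set_option maxHeartbeats 1600000 in
lemma assembly {n m : ℕ} {s δ ε : ℝ} (hs : 0 < s) (hsm : s ≤ m) (hδ : 0 < δ) (hε : ε = 2*δ)
    {μ : Measure (EuclideanSpace ℝ (Fin n))} [IsProbabilityMeasure μ]
    {x : EuclideanSpace ℝ (Fin n)} {k₀ : ℕ} (hk₀5 : 5 ≤ k₀)
    (hx3 : 0 < (μ (ball x (RR 3))).toReal)
    (hgood : ∀ k, k₀ ≤ k → ∀ l, 3 ≤ l → l ≤ k →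
      μ (ball x (RR l)) ≤
        ENNReal.ofReal ((2:ℝ) ^ (((k:ℝ) - (l:ℝ)) * s + (k:ℝ) * δ)) * μ (ball x (RR k))) :
    ∃ c > (0:ℝ), ∀ r : ℝ, 0 < r → r < RR k₀ →
      convPhi m μ x r ≤ c * r ^ (-ε) * (μ (ball x r)).toReal := by
  classical
  have hεpos : 0 < ε := by rw [hε]; linarith
  set a := (μ (ball x (RR 3))).toReal with ha
  have hlog2 : 0 < Real.log 2 := Real.log_pos one_lt_two
  set B : ℝ := (2:ℝ)^s + (2:ℝ)^(2*(m:ℝ))/(δ * Real.log 2) + (2:ℝ)^(3*(m:ℝ))/a with hB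
  have hBpos : 0 < B := by positivity
  refine ⟨B * (2:ℝ)^ε, by positivity, ?_⟩
  intro r hr hrlt
  have hr1 : r ≤ 1 := le_trans hrlt.le (RR_le_one k₀)
  -- choose the dyadic scale k
  have hex : ∃ k : ℕ, RR k ≤ r := by
    obtain ⟨j, hj⟩ := exists_pow_lt_of_lt_one hr (by norm_num : (1/2:ℝ) < 1)
    exact ⟨j, by rw [RR_eq]; exact hj.le⟩
  set k := Nat.find hex with hkdef
  have hk : RR k ≤ r := Nat.find_spec hex
  have hkk₀ : k₀ < k := by
    by_contra h
    push_neg at h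
    have := RR_anti h
    linarith
  have hk1 : 1 ≤ k := by omega
  have hrup : r < RR (k-1) := by
    have := Nat.find_min hex (m := k-1) (by omega)
    push_neg at this
    exact this
  -- pointwise bound on the integrand
  set f : EuclideanSpace ℝ (Fin n) → ℝ :=
    fun y => if ‖x - y‖ = 0 then 1 else min 1 (r ^ m / ‖x - y‖ ^ m) with hf
  set cl : ℕ → ℝ := fun l => (2:ℝ) ^ ((((l:ℝ)) + 2 - (k:ℝ)) * (m:ℝ)) with hcl
  set g : EuclideanSpace ℝ (Fin n) → ℝ :=
    fun y => (ball x (RR (k-1))).indicator (fun _ => (1:ℝ)) y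
      + ∑ l ∈ Finset.Icc 3 (k-2), cl l * (ball x (RR l)).indicator (fun _ => (1:ℝ)) y
      + (8*r)^m with hg
  have hfnonneg : ∀ y, 0 ≤ f y := by
    intro y
    rw [hf]
    dsimp only
    split
    · norm_num
    · exact le_min (by norm_num) (by positivity)
  have hfle1 : ∀ y, f y ≤ 1 := by
    intro y
    rw [hf]
    dsimp only
    split
    · exact le_refl 1
    · exact min_le_left _ _
  -- measurability / integrability
  have hcont : Continuous fun y : EuclideanSpace ℝ (Fin n) => ‖x - y‖ :=
    (continuous_const.sub continuous_id).norm
  have hfmeas : Measurable f := by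
    rw [hf]
    apply Measurable.ite
    · exact isClosed_eq (by fun_prop) continuous_const |>.measurableSet
    · exact measurable_const
    · exact measurable_const.min (measurable_const.div ((hcont.measurable).pow_const m))
  have hfint : Integrable f μ := by
    apply Integrable.mono' (integrable_const (1:ℝ)) hfmeas.aestronglyMeasurable
    filter_upwards with y
    rw [Real.norm_eq_abs, abs_of_nonneg (hfnonneg y)]
    exact hfle1 y
  have hgint : Integrable g μ := by
    rw [hg]
    apply Integrable.add
    apply Integrable.add
    · exact (integrable_const (1:ℝ)).indicator measurableSet_ball
    · apply integrable_finset_sum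
      intro l _
      exact (((integrable_const (1:ℝ)).indicator measurableSet_ball).const_mul (cl l))
    · exact integrable_const _
  -- pointwise bound f ≤ g
  have hindnn : ∀ (t : ℝ) (y : EuclideanSpace ℝ (Fin n)), (0:ℝ) ≤
      (ball x t).indicator (fun _ => (1:ℝ)) y := by
    intro t y
    exact Set.indicator_nonneg (fun _ _ => zero_le_one) y
  have hsumnn : ∀ y, (0:ℝ) ≤ ∑ l ∈ Finset.Icc 3 (k-2), cl l * (ball x (RR l)).indicator (fun _ => (1:ℝ)) y := by
    intro y
    apply Finset.sum_nonneg
    intro l _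
    exact mul_nonneg (by positivity) (hindnn _ y)
  have hfg : ∀ y, f y ≤ g y := by
    intro y
    have h8r : (0:ℝ) ≤ (8*r)^m := by positivity
    rcases lt_or_ge ‖x - y‖ (RR (k-1)) with hcase | hcase
    · -- y in the central ball
      have hyball : y ∈ ball x (RR (k-1)) := by
        rw [mem_ball, dist_comm, dist_eq_norm]
        exact hcase
      have : (ball x (RR (k-1))).indicator (fun _ => (1:ℝ)) y = 1 := by
        rw [Set.indicator_of_mem hyball]
      rw [hg]
      dsimp only
      rw [this]
      have := hfle1 y
      have := hsumnn y
      linarith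
    · -- away from the centre
      have hd0 : 0 < ‖x - y‖ := lt_of_lt_of_le (RR_pos _) hcase
      have hfval : f y = min 1 (r ^ m / ‖x - y‖ ^ m) := by
        rw [hf]
        dsimp only
        rw [if_neg (by positivity)]
      rcases lt_or_ge ‖x - y‖ (RR 3) with hcase2 | hcase2
      · -- annulus case : find l with RR (l+1) ≤ ‖x-y‖ < RR l
        have hex2 : ∃ j : ℕ, RR (j+1) ≤ ‖x - y‖ := by
          refine ⟨k-2, ?_⟩
          have : (k-2)+1 = k-1 := by omega
          rw [this]
          exact hcase
        set l := Nat.find hex2 with hldef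
        have hl1 : RR (l+1) ≤ ‖x - y‖ := Nat.find_spec hex2
        have hlk2 : l ≤ k-2 := Nat.find_le (by
          have h' : (k-2)+1 = k-1 := by omega
          rw [h']
          exact hcase)
        have hl3 : 3 ≤ l := by
          by_contra h
          push_neg at h
          have h1 : RR 3 ≤ RR (l+1) := RR_anti (by omega)
          linarith
        have hdlt : ‖x - y‖ < RR l := by
          have := Nat.find_min hex2 (m := l-1) (by omega)
          push_neg at this
          have h' : (l-1)+1 = l := by omega
          rw [h'] at this
          exact this
        have hyball : y ∈ ball x (RR l) := by
          rw [mem_ball, dist_comm, dist_eq_norm]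
          exact hdlt
        -- f y ≤ cl l
        have hfcl : f y ≤ cl l := by
          rw [hfval]
          apply le_trans (min_le_right _ _)
          have h1 : r ^ m ≤ (RR (k-1)) ^ m := pow_le_pow_left₀ hr.le hrup.le m
          have h2 : (RR (l+1)) ^ m ≤ ‖x - y‖ ^ m := pow_le_pow_left₀ (RR_pos _).le hl1 m
          have h3 : r ^ m / ‖x - y‖ ^ m ≤ (RR (k-1)) ^ m / (RR (l+1)) ^ m := by
            apply div_le_div₀ (pow_nonneg (RR_pos _).le m) h1 (pow_pos (RR_pos _) m) h2
          apply h3.trans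
          -- (RR (k-1))^m / (RR (l+1))^m = 2^((l+2-k)m)
          have hkc : ((k-1:ℕ):ℝ) = (k:ℝ) - 1 := by
            have := Nat.cast_sub hk1 (R := ℝ); push_cast at this ⊢; linarith
          have h4 : RR (k-1) / RR (l+1) = (2:ℝ) ^ ((l:ℝ) + 2 - (k:ℝ)) := by
            rw [RR, RR, ← Real.rpow_sub two_pos]
            congr 1
            rw [hkc]
            push_cast
            ring
          have h5 : (RR (k-1))^m / (RR (l+1))^m = ((2:ℝ) ^ ((l:ℝ) + 2 - (k:ℝ)))^m := by
            rw [← div_pow, h4]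
          rw [h5, hcl]
          dsimp only
          rw [← Real.rpow_natCast ((2:ℝ) ^ ((l:ℝ) + 2 - (k:ℝ))) m, ← Real.rpow_mul (by norm_num)]
        -- g y ≥ cl l
        rw [hg]
        dsimp only
        have hsumge : cl l ≤ ∑ j ∈ Finset.Icc 3 (k-2), cl j * (ball x (RR j)).indicator (fun _ => (1:ℝ)) y := by
          have hmem : l ∈ Finset.Icc 3 (k-2) := Finset.mem_Icc.2 ⟨hl3, hlk2⟩
          have : cl l * (ball x (RR l)).indicator (fun _ => (1:ℝ)) y = cl l := by
            rw [Set.indicator_of_mem hyball]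
            ring
          rw [← this]
          apply Finset.single_le_sum (fun j _ => mul_nonneg (by positivity) (hindnn _ y)) hmem
        have := hindnn (RR (k-1)) y
        linarith [hfcl]
      · -- outer region
        have hfout : f y ≤ (8*r)^m := by
          rw [hfval]
          apply le_trans (min_le_right _ _)
          have hR3 : RR 3 = 1/8 := by
            rw [RR_eq]
            norm_num
          have h2 : (1/8:ℝ) ≤ ‖x - y‖ := by rw [← hR3]; exact hcase2
          have h3 : ((1/8:ℝ))^m ≤ ‖x - y‖ ^ m := pow_le_pow_left₀ (by norm_num) h2 m
          have h4 : r ^ m / ‖x - y‖ ^ m ≤ r ^ m / (1/8:ℝ)^m :=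
            div_le_div₀ (by positivity) le_rfl (by positivity) h3
          apply h4.trans
          have h5 : r ^ m / (1/8:ℝ)^m = (8*r)^m := by
            rw [← div_pow]
            congr 1
            ring
          rw [h5]
        rw [hg]
        dsimp only
        have := hindnn (RR (k-1)) y
        have := hsumnn y
        linarith
  -- integrate
  have hint : convPhi m μ x r ≤ (μ (ball x (RR (k-1)))).toReal
      + (∑ l ∈ Finset.Icc 3 (k-2), cl l * (μ (ball x (RR l))).toReal) + (8*r)^m := by
    have h1 : convPhi m μ x r = ∫ y, f y ∂μ := rfl
    have h2 : ∫ y, f y ∂μ ≤ ∫ y, g y ∂μ := integral_mono hfint hgint hfg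
    have h3 : ∫ y, g y ∂μ = (μ (ball x (RR (k-1)))).toReal
        + (∑ l ∈ Finset.Icc 3 (k-2), cl l * (μ (ball x (RR l))).toReal) + (8*r)^m := by
      rw [hg]
      rw [integral_add (by
          apply Integrable.add
          · exact (integrable_const (1:ℝ)).indicator measurableSet_ball
          · apply integrable_finset_sum
            intro l _
            exact (((integrable_const (1:ℝ)).indicator measurableSet_ball).const_mul (cl l)))
        (integrable_const _)]
      rw [integral_add ((integrable_const (1:ℝ)).indicator measurableSet_ball)
        (by
          apply integrable_finset_sum
          intro l _
          exact (((integrable_const (1:ℝ)).indicator measurableSet_ball).const_mul (cl l)))]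
      rw [integral_finset_sum _ (fun l _ =>
        (((integrable_const (1:ℝ)).indicator measurableSet_ball).const_mul (cl l)))]
      congr 1
      · congr 1
        · simpa [measureReal_def] using integral_indicator_const (1:ℝ) (measurableSet_ball (x := x) (ε := RR (k-1)))
        · apply Finset.sum_congr rfl
          intro l _
          rw [integral_const_mul]
          congr 1
          simpa [measureReal_def] using integral_indicator_const (1:ℝ) (measurableSet_ball (x := x) (ε := RR l))
      · simp
    rw [h1]
    exact h2.trans (le_of_eq h3)
  -- numerics
  set Mk := (μ (ball x (RR k))).toReal with hMk
  have hMknn : 0 ≤ Mk := ENNReal.toReal_nonneg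
  have hgoodR : ∀ l, 3 ≤ l → l ≤ k →
      (μ (ball x (RR l))).toReal ≤ (2:ℝ)^(((k:ℝ)-(l:ℝ))*s + (k:ℝ)*δ) * Mk := by
    intro l h3 hlk
    have h := hgood k (le_of_lt hkk₀) l h3 hlk
    have hne : ENNReal.ofReal ((2:ℝ)^(((k:ℝ)-(l:ℝ))*s + (k:ℝ)*δ)) * μ (ball x (RR k)) ≠ ⊤ :=
      ENNReal.mul_ne_top ENNReal.ofReal_ne_top (measure_ne_top μ _)
    have h2 := ENNReal.toReal_mono hne h
    rwa [ENNReal.toReal_mul, ENNReal.toReal_ofReal (by positivity)] at h2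
  have hkc : ((k-1:ℕ):ℝ) = (k:ℝ) - 1 := by
    have := Nat.cast_sub hk1 (R := ℝ); push_cast at this ⊢; linarith
  have hT1 : (μ (ball x (RR (k-1)))).toReal ≤ (2:ℝ)^s * ((2:ℝ)^((k:ℝ)*δ) * Mk) := by
    have h := hgoodR (k-1) (by omega) (by omega)
    rw [hkc] at h
    have hexp : (((k:ℝ) - ((k:ℝ)-1)) * s + (k:ℝ)*δ) = s + (k:ℝ)*δ := by ring
    rw [hexp, Real.rpow_add two_pos, mul_assoc] at h
    exact h
  have hT2each : ∀ l ∈ Finset.Icc 3 (k-2), cl l * (μ (ball x (RR l))).toReal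
      ≤ (2:ℝ)^(2*(m:ℝ)) * ((2:ℝ)^((k:ℝ)*δ) * Mk) := by
    intro l hl
    obtain ⟨h3, hlk2⟩ := Finset.mem_Icc.1 hl
    have hlk : l ≤ k := by omega
    have h := hgoodR l h3 hlk
    have hclpos : 0 < cl l := by rw [hcl]; exact Real.rpow_pos_of_pos two_pos _
    have step : cl l * (μ (ball x (RR l))).toReal
        ≤ cl l * ((2:ℝ)^(((k:ℝ)-(l:ℝ))*s + (k:ℝ)*δ) * Mk) :=
      mul_le_mul_of_nonneg_left h hclpos.le
    apply step.trans
    have hkl : (l:ℝ) ≤ (k:ℝ) := by exact_mod_cast hlk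
    have key : cl l * (2:ℝ)^(((k:ℝ)-(l:ℝ))*s + (k:ℝ)*δ)
        ≤ (2:ℝ)^(2*(m:ℝ)) * (2:ℝ)^((k:ℝ)*δ) := by
      rw [hcl]
      dsimp only
      rw [← Real.rpow_add two_pos, ← Real.rpow_add two_pos]
      apply (Real.rpow_le_rpow_left_iff one_lt_two).2
      nlinarith [mul_nonneg (sub_nonneg.2 hkl) (sub_nonneg.2 hsm)]
    calc cl l * ((2:ℝ)^(((k:ℝ)-(l:ℝ))*s + (k:ℝ)*δ) * Mk)
        = (cl l * (2:ℝ)^(((k:ℝ)-(l:ℝ))*s + (k:ℝ)*δ)) * Mk := by ring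
      _ ≤ ((2:ℝ)^(2*(m:ℝ)) * (2:ℝ)^((k:ℝ)*δ)) * Mk := mul_le_mul_of_nonneg_right key hMknn
      _ = (2:ℝ)^(2*(m:ℝ)) * ((2:ℝ)^((k:ℝ)*δ) * Mk) := by ring
  have hT2 : (∑ l ∈ Finset.Icc 3 (k-2), cl l * (μ (ball x (RR l))).toReal)
      ≤ (k:ℝ) * ((2:ℝ)^(2*(m:ℝ)) * ((2:ℝ)^((k:ℝ)*δ) * Mk)) := by
    have hconstnn : (0:ℝ) ≤ (2:ℝ)^(2*(m:ℝ)) * ((2:ℝ)^((k:ℝ)*δ) * Mk) := by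
      apply mul_nonneg (by positivity) (mul_nonneg (by positivity) hMknn)
    calc (∑ l ∈ Finset.Icc 3 (k-2), cl l * (μ (ball x (RR l))).toReal)
        ≤ ∑ _l ∈ Finset.Icc 3 (k-2), (2:ℝ)^(2*(m:ℝ)) * ((2:ℝ)^((k:ℝ)*δ) * Mk) :=
          Finset.sum_le_sum hT2each
      _ = ((Finset.Icc 3 (k-2)).card : ℝ) * ((2:ℝ)^(2*(m:ℝ)) * ((2:ℝ)^((k:ℝ)*δ) * Mk)) := by
          rw [Finset.sum_const, nsmul_eq_mul]
      _ ≤ (k:ℝ) * ((2:ℝ)^(2*(m:ℝ)) * ((2:ℝ)^((k:ℝ)*δ) * Mk)) := by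
          apply mul_le_mul_of_nonneg_right ?_ hconstnn
          have : (Finset.Icc 3 (k-2)).card ≤ k := by
            rw [Nat.card_Icc]
            omega
          exact_mod_cast this
  have hklog : (k:ℝ) ≤ (2:ℝ)^((k:ℝ)*δ) / (δ * Real.log 2) := by
    have h1 : Real.log 2 * ((k:ℝ)*δ) + 1 ≤ Real.exp (Real.log 2 * ((k:ℝ)*δ)) :=
      Real.add_one_le_exp _
    have h2 : (2:ℝ)^((k:ℝ)*δ) = Real.exp (Real.log 2 * ((k:ℝ)*δ)) := Real.rpow_def_of_pos two_pos _
    rw [le_div_iff₀ (by positivity)]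
    rw [← h2] at h1
    nlinarith [h1]
  have hT3 : (8*r)^m ≤ (2:ℝ)^(3*(m:ℝ))/a * ((2:ℝ)^((k:ℝ)*δ) * Mk) := by
    have h8 : ((8:ℝ))^m = (2:ℝ)^(3*(m:ℝ)) := by
      have : (8:ℝ) = (2:ℝ)^(3:ℝ) := by
        rw [show (3:ℝ) = ((3:ℕ):ℝ) by norm_num, Real.rpow_natCast]
        norm_num
      rw [this, ← Real.rpow_natCast ((2:ℝ)^(3:ℝ)) m, ← Real.rpow_mul (by norm_num)]
    have hrm : r^m ≤ r^s := by
      rw [← Real.rpow_natCast r m]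
      exact Real.rpow_le_rpow_of_exponent_ge hr hr1 hsm
    have hrs : r^s ≤ (RR (k-1))^s := Real.rpow_le_rpow hr.le hrup.le hs.le
    have hRks : (RR (k-1))^s = (2:ℝ)^(-((k:ℝ)-1)*s) := by
      rw [RR, ← Real.rpow_mul (by norm_num), hkc]
    have h3 := hgoodR 3 le_rfl (by omega)
    -- 2^(-(k-1)s) * a ≤ 2^(kδ) * Mk
    have hkey : (2:ℝ)^(-((k:ℝ)-1)*s) * a ≤ (2:ℝ)^((k:ℝ)*δ) * Mk := by
      have step : (2:ℝ)^(-((k:ℝ)-1)*s) * a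
          ≤ (2:ℝ)^(-((k:ℝ)-1)*s) * ((2:ℝ)^(((k:ℝ)-3)*s + (k:ℝ)*δ) * Mk) := by
        apply mul_le_mul_of_nonneg_left ?_ (by positivity)
        simpa using h3
      apply step.trans
      have heq : (2:ℝ)^(-((k:ℝ)-1)*s) * ((2:ℝ)^(((k:ℝ)-3)*s + (k:ℝ)*δ) * Mk)
          = (2:ℝ)^(-2*s + (k:ℝ)*δ) * Mk := by
        rw [← mul_assoc, ← Real.rpow_add two_pos]
        congr 2
        ring
      rw [heq]
      apply mul_le_mul_of_nonneg_right ?_ hMknn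
      apply (Real.rpow_le_rpow_left_iff one_lt_two).2
      nlinarith
    have hstep : (8*r)^m ≤ (2:ℝ)^(3*(m:ℝ)) * (2:ℝ)^(-((k:ℝ)-1)*s) := by
      rw [mul_pow, h8]
      apply mul_le_mul_of_nonneg_left ?_ (by positivity)
      calc r^m ≤ r^s := hrm
        _ ≤ (RR (k-1))^s := hrs
        _ = (2:ℝ)^(-((k:ℝ)-1)*s) := hRks
    apply hstep.trans
    rw [div_mul_eq_mul_div, le_div_iff₀ hx3] at *
    calc (2:ℝ)^(3*(m:ℝ)) * (2:ℝ)^(-((k:ℝ)-1)*s) * a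
        = (2:ℝ)^(3*(m:ℝ)) * ((2:ℝ)^(-((k:ℝ)-1)*s) * a) := by ring
      _ ≤ (2:ℝ)^(3*(m:ℝ)) * ((2:ℝ)^((k:ℝ)*δ) * Mk) := by
          apply mul_le_mul_of_nonneg_left hkey (by positivity)
  -- combine
  have h2kδε : (2:ℝ)^((k:ℝ)*δ) ≤ (2:ℝ)^((k:ℝ)*ε) := by
    apply (Real.rpow_le_rpow_left_iff one_lt_two).2
    have : (0:ℝ) ≤ (k:ℝ) := Nat.cast_nonneg k
    nlinarith
  have h2k2 : (2:ℝ)^((k:ℝ)*δ) * (2:ℝ)^((k:ℝ)*δ) = (2:ℝ)^((k:ℝ)*ε) := by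
    rw [← Real.rpow_add two_pos]
    congr 1
    rw [hε]
    ring
  set Z : ℝ := (2:ℝ)^((k:ℝ)*ε) * Mk with hZ
  have hZnn : 0 ≤ Z := mul_nonneg (by positivity) hMknn
  have hS1 : (μ (ball x (RR (k-1)))).toReal ≤ (2:ℝ)^s * Z := by
    apply hT1.trans
    rw [hZ]
    apply mul_le_mul_of_nonneg_left (mul_le_mul_of_nonneg_right h2kδε hMknn) (by positivity)
  have hS2 : (∑ l ∈ Finset.Icc 3 (k-2), cl l * (μ (ball x (RR l))).toReal)
      ≤ (2:ℝ)^(2*(m:ℝ))/(δ * Real.log 2) * Z := by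
    apply hT2.trans
    have hconstnn : (0:ℝ) ≤ (2:ℝ)^(2*(m:ℝ)) * ((2:ℝ)^((k:ℝ)*δ) * Mk) := by
      apply mul_nonneg (by positivity) (mul_nonneg (by positivity) hMknn)
    calc (k:ℝ) * ((2:ℝ)^(2*(m:ℝ)) * ((2:ℝ)^((k:ℝ)*δ) * Mk))
        ≤ ((2:ℝ)^((k:ℝ)*δ) / (δ * Real.log 2)) * ((2:ℝ)^(2*(m:ℝ)) * ((2:ℝ)^((k:ℝ)*δ) * Mk)) :=
          mul_le_mul_of_nonneg_right hklog hconstnn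
      _ = (2:ℝ)^(2*(m:ℝ))/(δ * Real.log 2) * (((2:ℝ)^((k:ℝ)*δ) * (2:ℝ)^((k:ℝ)*δ)) * Mk) := by
          ring
      _ = (2:ℝ)^(2*(m:ℝ))/(δ * Real.log 2) * Z := by rw [h2k2, hZ]
  have hS3 : (8*r)^m ≤ (2:ℝ)^(3*(m:ℝ))/a * Z := by
    apply hT3.trans
    rw [hZ]
    apply mul_le_mul_of_nonneg_left (mul_le_mul_of_nonneg_right h2kδε hMknn) (by positivity)
  have htotal : convPhi m μ x r ≤ B * Z := by
    have hBZ : B * Z = (2:ℝ)^s * Z + (2:ℝ)^(2*(m:ℝ))/(δ * Real.log 2) * Z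
        + (2:ℝ)^(3*(m:ℝ))/a * Z := by
      rw [hB]
      ring
    rw [hBZ]
    linarith [hint, hS1, hS2, hS3]
  -- final conversion
  have h2k : (2:ℝ)^((k:ℝ)*ε) ≤ (2:ℝ)^ε * r^(-ε) := by
    have hRR : (2:ℝ)^((k:ℝ)) * RR (k-1) = 2 := by
      rw [RR, ← Real.rpow_add two_pos, hkc]
      rw [show ((k:ℝ) + -((k:ℝ)-1)) = 1 by ring, Real.rpow_one]
    have h2r : (2:ℝ)^((k:ℝ)) ≤ 2/r := by
      rw [le_div_iff₀ hr]
      have := mul_le_mul_of_nonneg_left hrup.le (by positivity : (0:ℝ) ≤ (2:ℝ)^((k:ℝ)))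
      rw [hRR] at this
      linarith
    calc (2:ℝ)^((k:ℝ)*ε) = ((2:ℝ)^((k:ℝ)))^ε := Real.rpow_mul (by norm_num) _ _
      _ ≤ (2/r)^ε := Real.rpow_le_rpow (by positivity) h2r hεpos.le
      _ = (2:ℝ)^ε * r^(-ε) := by
          rw [Real.div_rpow (by norm_num) hr.le, Real.rpow_neg hr.le, div_eq_mul_inv]
  have hMkr : Mk ≤ (μ (ball x r)).toReal :=
    ENNReal.toReal_mono (measure_ne_top μ _) (measure_mono (ball_subset_ball hk))
  calc convPhi m μ x r ≤ B * Z := htotal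
    _ = B * ((2:ℝ)^((k:ℝ)*ε) * Mk) := by rw [hZ]
    _ ≤ B * (((2:ℝ)^ε * r^(-ε)) * (μ (ball x r)).toReal) := by
        apply mul_le_mul_of_nonneg_left ?_ hBpos.le
        apply mul_le_mul h2k hMkr hMknn (by positivity)
    _ = B * (2:ℝ)^ε * r^(-ε) * (μ (ball x r)).toReal := by ring

theorem stmt_12 (n m : ℕ) (hm : 1 ≤ m) (hmn : m ≤ n) (s : ℝ) (hs : 0 < s) (hsm : s ≤ m)
    (μ : Measure (EuclideanSpace ℝ (Fin n))) [IsProbabilityMeasure μ]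
    (hcompact : IsCompact (measureSupport μ))
    (F : Set (EuclideanSpace ℝ (Fin n))) (hF : IsAhlforsRegular s F)
    (hsupp : measureSupport μ ⊆ F) :
    ∀ ε : ℝ, 0 < ε → ∀ᵐ x ∂μ, ∃ c > (0 : ℝ), ∃ r₀ > (0 : ℝ),
      ∀ r : ℝ, 0 < r → r < r₀ →
        convPhi m μ x r ≤ c * r ^ (-ε) * (μ (ball x r)).toReal := by
  intro ε hε
  obtain ⟨hFclosed, lam, C, hC, hlamF, hreg⟩ := hF
  set δ : ℝ := ε/2 with hδdef
  have hδ : 0 < δ := by positivity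
  have hsuppae : μ {x | x ∉ measureSupport μ} = 0 := by
    have h := ae_mem_measureSupport μ
    rw [ae_iff] at h
    exact h
  have hnet : ∀ t : ℝ, 0 < t → t ≤ 1/2 →
      ∃ P : Finset (EuclideanSpace ℝ (Fin n)), (∀ p ∈ P, p ∈ measureSupport μ) ∧
        (∀ p ∈ P, ∀ q ∈ P, p ≠ q → t ≤ dist p q) ∧
        measureSupport μ ⊆ ⋃ p ∈ P, ball p t :=
    fun t ht ht1 => net_exists hs hC hreg hcompact hsupp ht ht1
  have h1 := main_ae (μ := μ) (lam := lam) (δ := δ) hs hC hδ hreg hcompact hsupp hsuppae hnet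
  filter_upwards [h1, ae_mem_measureSupport μ] with x hx hxsupp
  obtain ⟨k₀, hk₀5, hgood⟩ := hx
  have hx3 : 0 < (μ (ball x (RR 3))).toReal := by
    have hpos := hxsupp (ball x (RR 3)) isOpen_ball (mem_ball_self (RR_pos 3))
    exact ENNReal.toReal_pos hpos.ne' (measure_ne_top μ _)
  obtain ⟨c, hc, hcon⟩ := assembly (m := m) (ε := ε) hs hsm hδ (show ε = 2*δ by rw [hδdef]; ring) hk₀5 hx3 hgood
  exact ⟨c, hc, RR k₀, RR_pos k₀, fun r hr hrlt => hcon r hr hrlt⟩
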